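/- The map M ↦ t₊(M) is strictly monotone increasing and continuous on (−1/(3√3), ∞) and maps this interval bijectively onto (1/√3, ∞). Consequently, for every X ∈ (−1/3, 0) there exists a unique M > −1/(3√3) such that −1/(9·t₊(M)²) = X. -/

import Mathlib

set_option maxHeartbeats 1000000

/-- The map `M ↦ t₊(M)` (largest root of `t³ − t − 2M`) is strictly
monotone increasing and continuous on `(−1/(3√3), ∞)` and maps this interval
bijectively onto `(1/√3, ∞)`. Consequently, for every `X ∈ (−1/3, 0)` there exists a
unique `M > −1/(3√3)` such that `−1/(9·t₊(M)²) = X`. -/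
theorem t_plus_monotone_bijective (tplus : ℝ → ℝ)
    (ht : ∀ M : ℝ, -1 / (3 * Real.sqrt 3) < M →
      IsGreatest {s : ℝ | s ^ 3 - s - 2 * M = 0} (tplus M)) :
    StrictMonoOn tplus (Set.Ioi (-1 / (3 * Real.sqrt 3))) ∧
    ContinuousOn tplus (Set.Ioi (-1 / (3 * Real.sqrt 3))) ∧
    Set.BijOn tplus (Set.Ioi (-1 / (3 * Real.sqrt 3))) (Set.Ioi (1 / Real.sqrt 3)) ∧
    (∀ X : ℝ, -1/3 < X → X < 0 →
      ∃! M : ℝ, -1 / (3 * Real.sqrt 3) < M ∧ -1 / (9 * (tplus M) ^ 2) = X) := by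
  set c := Real.sqrt 3 with hc
  have hc0 : (0:ℝ) < c := Real.sqrt_pos.mpr (by norm_num)
  have hc2 : c ^ 2 = 3 := Real.sq_sqrt (by norm_num)
  set u : ℝ := 1 / c with hu
  have hu0 : (0:ℝ) < u := by positivity
  have hu2 : u ^ 2 = 1/3 := by rw [hu, div_pow, hc2]; norm_num
  set m0 : ℝ := -1 / (3 * c) with hm0
  set g : ℝ → ℝ := fun t => (t ^ 3 - t) / 2 with hg
  have hgu : g u = m0 := by
    have : c^3 = 3 * c := by nlinarith
    simp only [hg, hu, hm0]
    field_simp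
    nlinarith
  -- strict monotonicity of g on Ici u
  have hg_mono : StrictMonoOn g (Set.Ici u) := by
    intro a ha b hb hab
    simp only [Set.mem_Ici] at ha hb
    have hba : 0 < b - a := by linarith
    have hub' : u < b := lt_of_le_of_lt ha hab
    have ha2 : 1/3 ≤ a ^ 2 := by nlinarith
    have hb2 : 1/3 < b ^ 2 := by nlinarith [mul_pos (sub_pos.mpr hub') (show (0:ℝ) < b + u by linarith)]
    have habm : 1/3 ≤ a * b := by nlinarith
    simp only [hg]
    nlinarith [mul_pos hba (show (0:ℝ) < a^2 + a*b + b^2 - 1 by linarith)]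
  -- existence of a root > u for each M > m0
  have hexists : ∀ M : ℝ, m0 < M → ∃ t, u < t ∧ g t = M := by
    intro M hM
    obtain ⟨T, hT2, h2MT⟩ : ∃ T : ℝ, 2 ≤ T ∧ 2 * M ≤ T :=
      ⟨|2 * M| + 2, by linarith [abs_nonneg (2 * M)], by linarith [le_abs_self (2 * M)]⟩
    have huT : u ≤ T := by
      have : u ≤ 1 := by nlinarith
      linarith
    have hgT : M ≤ g T := by
      have hTsq : 4 ≤ T ^ 2 := by nlinarith
      have hT3 : T ≤ T ^ 3 - T := by nlinarith
      simp only [hg]; linarith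
    have hcont : ContinuousOn g (Set.Icc u T) := by
      apply Continuous.continuousOn; simp only [hg]; continuity
    obtain ⟨t, htmem, htval⟩ := intermediate_value_Icc huT hcont ⟨hgu ▸ le_of_lt hM, hgT⟩
    refine ⟨t, ?_, htval⟩
    rcases lt_or_eq_of_le htmem.1 with h | h
    · exact h
    · exfalso; rw [← h, hgu] at htval; linarith [htval ▸ hM]
  -- core fact about tplus
  have hcore : ∀ M : ℝ, m0 < M → u < tplus M ∧ g (tplus M) = M := by
    intro M hM
    obtain ⟨hmem, hub⟩ := ht M hM
    obtain ⟨t, htu, htval⟩ := hexists M hM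
    have htroot : t ∈ {s : ℝ | s ^ 3 - s - 2 * M = 0} := by
      simp only [Set.mem_setOf_eq]
      have : (t^3 - t)/2 = M := htval
      linarith
    have h1 : t ≤ tplus M := hub htroot
    have h2 : g (tplus M) = M := by
      simp only [Set.mem_setOf_eq] at hmem
      simp only [hg]; linarith
    exact ⟨lt_of_lt_of_le htu h1, h2⟩
  -- strict monotonicity of tplus
  have h1 : StrictMonoOn tplus (Set.Ioi m0) := by
    intro a ha b hb hab
    obtain ⟨hua, hga⟩ := hcore a ha
    obtain ⟨hub, hgb⟩ := hcore b hb
    have := (hg_mono.lt_iff_lt (le_of_lt hua) (le_of_lt hub)).mp (by rw [hga, hgb]; exact hab)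
    exact this
  -- bijectivity
  have h3 : Set.BijOn tplus (Set.Ioi m0) (Set.Ioi u) := by
    refine ⟨fun M hM => (hcore M hM).1, h1.injOn, ?_⟩
    intro y hy
    simp only [Set.mem_Ioi] at hy
    have hMy : m0 < g y := by
      rw [← hgu]
      exact hg_mono (Set.mem_Ici.mpr le_rfl) (Set.mem_Ici.mpr (le_of_lt hy)) hy
    refine ⟨g y, hMy, ?_⟩
    obtain ⟨hut, hgt⟩ := hcore (g y) hMy
    exact hg_mono.injOn (Set.mem_Ici.mpr (le_of_lt hut)) (Set.mem_Ici.mpr (le_of_lt hy)) hgt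
  -- continuity
  have h2 : ContinuousOn tplus (Set.Ioi m0) := by
    intro a ha
    have : ContinuousAt tplus a := by
      apply h1.continuousAt_of_image_mem_nhds (isOpen_Ioi.mem_nhds ha)
      rw [h3.image_eq]
      exact isOpen_Ioi.mem_nhds ((hcore a ha).1)
    exact this.continuousWithinAt
  refine ⟨h1, h2, h3, ?_⟩
  intro X hX1 hX2
  set s : ℝ := Real.sqrt (-X) with hs
  have hs0 : 0 < s := Real.sqrt_pos.mpr (by linarith)
  have hs2 : s ^ 2 = -X := Real.sq_sqrt (by linarith)
  set y : ℝ := 1 / (3 * s) with hy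
  have hy0 : 0 < y := by positivity
  have hyu : u < y := by
    rw [hu, hy, div_lt_div_iff₀ hc0 (by positivity)]
    have h9 : 9 * s^2 < 3 := by nlinarith
    nlinarith [mul_pos hc0 hs0]
  obtain ⟨M, hM, hMy⟩ := h3.surjOn (Set.mem_Ioi.mpr hyu)
  simp only [Set.mem_Ioi] at hM
  have hy2 : 9 * y ^ 2 = 1 / s ^ 2 := by
    rw [hy]
    field_simp
    ring
  have hval : -1 / (9 * (tplus M) ^ 2) = X := by
    rw [hMy, hy2, one_div, div_inv_eq_mul]
    linarith
  refine ⟨M, ⟨hM, hval⟩, ?_⟩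
  rintro M' ⟨hM', hval'⟩
  have hposM : 0 < tplus M := lt_trans hu0 (hcore M hM).1
  have hposM' : 0 < tplus M' := lt_trans hu0 (hcore M' hM').1
  have hsq : (tplus M') ^ 2 = (tplus M) ^ 2 := by
    have hn : (9 * (tplus M) ^ 2) ≠ 0 := by positivity
    have hn' : (9 * (tplus M') ^ 2) ≠ 0 := by positivity
    have e1 : (-1 : ℝ) = X * (9 * (tplus M) ^ 2) := (div_eq_iff hn).mp hval
    have e2 : (-1 : ℝ) = X * (9 * (tplus M') ^ 2) := (div_eq_iff hn').mp hval'
    have hXne : X ≠ 0 := ne_of_lt hX2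
    have : X * (9 * (tplus M') ^ 2) = X * (9 * (tplus M) ^ 2) := by linarith
    have := mul_left_cancel₀ hXne this
    linarith
  have heq : tplus M' = tplus M :=
    (pow_left_strictMonoOn₀ two_ne_zero).injOn (le_of_lt hposM') (le_of_lt hposM) hsq
  exact h1.injOn (Set.mem_Ioi.mpr hM') (Set.mem_Ioi.mpr hM) heq
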